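/- arXiv:2604.23302 — 2 statements merged into one kernel-verified Lean document; each statement's English description precedes it below -/
import Mathlib

section
/- Let (G,m,w) be a weighted locally finite graph and Γ a subgroup of Aut(G,m,w) acting freely on V(G), with quotient weighted graph Q = G/Γ (vertex measure m_Q([x]) = m(x), edge weight w_Q([x],[y]) = ∑_{g∈Γ} w(x, g·y)). Then for all vertices x,y and all n ≥ 1, the n-step transition functions satisfy p_n^Q([x],[y]) = ∑_{g ∈ Γ} p_n^G(x, g·y), and the heat kernels satisfy q_n^Q([x],[y]) = ∑_{g ∈ Γ} q_n^G(x, g·y). -/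
open scoped BigOperators Classical

/-- Transition functions and heat kernels of a quotient weighted graph `Q = G/Γ` for a
free action of `Γ`: `p_n^Q([x],[y]) = ∑_{g∈Γ} p_n^G(x, g·y)` and
`q_n^Q([x],[y]) = ∑_{g∈Γ} q_n^G(x, g·y)` (with `q_n = p_n/m`). -/
theorem quotient_graph_heat_kernel
    {V : Type*} [DecidableEq V] {G : Type*} [Group G] [MulAction G V]
    (m : V → ℝ) (hm : ∀ x, 0 < m x)
    (w : V → V → ℝ) (hsym : ∀ x y, w x y = w y x) (hpos : ∀ x y, 0 ≤ w x y)
    (hloop : ∀ x, w x x = 0)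
    (hlf : ∀ x, {y | w x y ≠ 0}.Finite)
    (hGm : ∀ (g : G) (x : V), m (g • x) = m x)
    (hGw : ∀ (g : G) (x y : V), w (g • x) (g • y) = w x y)
    (hfree : ∀ (g : G) (x : V), g • x = x → g = 1)
    (mQ : Quotient (MulAction.orbitRel G V) → ℝ)
    (hmQ : ∀ x : V, mQ (Quotient.mk (MulAction.orbitRel G V) x) = m x)
    (wQ : Quotient (MulAction.orbitRel G V) → Quotient (MulAction.orbitRel G V) → ℝ)
    (hwQ : ∀ x y : V, wQ (Quotient.mk (MulAction.orbitRel G V) x)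
        (Quotient.mk (MulAction.orbitRel G V) y) = ∑ᶠ g : G, w x (g • y))
    (pG : ℕ → V → V → ℝ)
    (hpG0 : ∀ x y : V, pG 0 x y = if x = y then 1 else 0)
    (hpGrec : ∀ (n : ℕ) (x y : V),
      pG (n + 1) x y = ∑ᶠ z,
        ((1 - (1 / m x) * ∑ᶠ u, w x u) * (if x = z then 1 else 0) + w x z / m x) *
          pG n z y)
    (pQ : ℕ → Quotient (MulAction.orbitRel G V) → Quotient (MulAction.orbitRel G V) → ℝ)
    (hpQ0 : ∀ a b, pQ 0 a b = if a = b then 1 else 0)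
    (hpQrec : ∀ (n : ℕ) (a b : Quotient (MulAction.orbitRel G V)),
      pQ (n + 1) a b = ∑ᶠ c,
        ((1 - (1 / mQ a) * ∑ᶠ u, wQ a u) * (if a = c then 1 else 0) + wQ a c / mQ a) *
          pQ n c b)
    (n : ℕ) (hn : 1 ≤ n) (x y : V) :
    pQ n (Quotient.mk (MulAction.orbitRel G V) x) (Quotient.mk (MulAction.orbitRel G V) y)
        = ∑ᶠ g : G, pG n x (g • y) ∧
    pQ n (Quotient.mk (MulAction.orbitRel G V) x) (Quotient.mk (MulAction.orbitRel G V) y)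
        / mQ (Quotient.mk (MulAction.orbitRel G V) y)
        = ∑ᶠ g : G, pG n x (g • y) / m (g • y) := by
  classical
  set mk : V → Quotient (MulAction.orbitRel G V) := Quotient.mk (MulAction.orbitRel G V)
    with hmkdef
  set K : V → V → ℝ := fun a z =>
    (1 - (1 / m a) * ∑ᶠ u, w a u) * (if a = z then 1 else 0) + w a z / m a with hKdef
  -- injectivity of the action maps
  have hsmul_inj : ∀ b : V, Function.Injective (fun g : G => g • b) := by
    intro b g1 g2 h
    simp only at h
    have h2 : (g1⁻¹ * g2) • b = b := by rw [mul_smul, ← h, inv_smul_smul]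
    have := hfree _ _ h2
    exact inv_mul_eq_one.mp this
  -- orbit-equality characterization
  have hmk_eq : ∀ a b : V, mk a = mk b ↔ ∃ g : G, g • b = a := by
    intro a b
    rw [hmkdef, Quotient.eq]
    exact MulAction.orbitRel_apply.trans MulAction.mem_orbit_iff
  have hQmk : ∀ (c : Quotient (MulAction.orbitRel G V)) (g : G), mk (g • c.out) = c := by
    intro c g
    have h1 : mk (g • c.out) = mk c.out := (hmk_eq _ _).2 ⟨g, rfl⟩
    rw [h1, hmkdef, Quotient.out_eq]
  -- delta sums
  have hdelta : ∀ (a b : V),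
      (∑ᶠ g : G, (if a = g • b then (1 : ℝ) else 0)) = if mk a = mk b then 1 else 0 := by
    intro a b
    by_cases h : mk a = mk b
    · obtain ⟨g0, hg0⟩ := (hmk_eq a b).1 h
      rw [if_pos h]
      rw [finsum_eq_single _ g0]
      · rw [if_pos hg0.symm]
      · intro g hg
        rw [if_neg]
        intro hc
        exact hg (hsmul_inj b (hc.symm.trans hg0.symm))
    · rw [if_neg h, finsum_eq_zero_of_forall_eq_zero]
      intro g
      rw [if_neg]
      intro hc
      exact h ((hmk_eq a b).2 ⟨g, hc.symm⟩)
  -- finite supports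
  have hK_supp : ∀ a : V, (Function.support (K a)).Finite := by
    intro a
    apply Set.Finite.subset ((hlf a).insert a)
    intro z hz
    by_contra hcon
    simp only [Set.mem_insert_iff, Set.mem_setOf_eq, not_or, not_not] at hcon
    apply hz
    simp only [hKdef, Function.mem_support, not_not]
    rw [if_neg (fun h => hcon.1 h.symm), hcon.2, mul_zero, zero_div, add_zero]
  have hdeg_equi : ∀ (g : G) (a : V), (∑ᶠ u, w (g • a) u) = ∑ᶠ u, w a u := by
    intro g a
    rw [← finsum_comp_equiv (MulAction.toPerm g : Equiv.Perm V) (f := fun u => w (g • a) u)]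
    apply finsum_congr
    intro u
    show w (g • a) (g • u) = w a u
    exact hGw g a u
  have hK_equi : ∀ (g : G) (a z : V), K (g • a) (g • z) = K a z := by
    intro g a z
    simp only [hKdef]
    rw [hGm, hdeg_equi, hGw]
    simp only [smul_left_cancel_iff]
  have hpG_equi : ∀ (n : ℕ) (g : G) (a b : V), pG n (g • a) (g • b) = pG n a b := by
    intro n
    induction n with
    | zero =>
      intro g a b
      rw [hpG0, hpG0]
      simp only [smul_left_cancel_iff]
    | succ n ih =>
      intro g a b
      rw [hpGrec, hpGrec]
      rw [← finsum_comp_equiv (MulAction.toPerm g : Equiv.Perm V)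
        (f := fun z => ((1 - (1 / m (g • a)) * ∑ᶠ u, w (g • a) u) *
          (if g • a = z then 1 else 0) + w (g • a) z / m (g • a)) * pG n z (g • b))]
    -- termwise
      apply finsum_congr
      intro z
      have h1 : ((1 - (1 / m (g • a)) * ∑ᶠ u, w (g • a) u) *
          (if g • a = g • z then 1 else 0) + w (g • a) (g • z) / m (g • a)) = K a z :=
        hK_equi g a z
      show ((1 - (1 / m (g • a)) * ∑ᶠ u, w (g • a) u) *
          (if g • a = g • z then 1 else 0) + w (g • a) (g • z) / m (g • a)) * pG n (g • z) (g • b)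
          = ((1 - (1 / m a) * ∑ᶠ u, w a u) * (if a = z then 1 else 0) + w a z / m a)
            * pG n z b
      rw [h1, ih g z b]
  have hpG_supp : ∀ (n : ℕ) (a : V), (Function.support (pG n a)).Finite := by
    intro n
    induction n with
    | zero =>
      intro a
      apply Set.Finite.subset (Set.finite_singleton a)
      intro b hb
      by_contra hcon
      apply hb
      simp only [Function.mem_support, not_not, hpG0]
      rw [if_neg (fun h : a = b => hcon (by rw [← h]; exact Set.mem_singleton a))]
    | succ n ih =>
      intro a
      apply Set.Finite.subset ((hK_supp a).biUnion (fun z _ => ih z))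
      intro b hb
      by_contra hcon
      apply hb
      simp only [Function.mem_support, not_not, hpGrec]
      apply finsum_eq_zero_of_forall_eq_zero
      intro z
      by_cases hz : K a z = 0
      · have : ((1 - (1 / m a) * ∑ᶠ u, w a u) * (if a = z then 1 else 0) + w a z / m a) = 0 := hz
        rw [this, zero_mul]
      · have hb0 : pG n z b = 0 := by
          by_contra hb0
          exact hcon (Set.mem_biUnion hz hb0)
        rw [hb0, mul_zero]
  have hg_supp : ∀ (n : ℕ) (a b : V), {g : G | pG n a (g • b) ≠ 0}.Finite := by
    intro n a b
    exact Set.Finite.preimage ((hsmul_inj b).injOn) (hpG_supp n a)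
  have hgw_supp : ∀ (a b : V), {g : G | w a (g • b) ≠ 0}.Finite := by
    intro a b
    exact Set.Finite.preimage ((hsmul_inj b).injOn) (hlf a)
  have hgK_supp : ∀ (a b : V), {g : G | K a (g • b) ≠ 0}.Finite := by
    intro a b
    exact Set.Finite.preimage ((hsmul_inj b).injOn) (hK_supp a)
  -- decomposition of a finite-support sum over V into orbits
  have hbij : Function.Bijective
      (fun p : Quotient (MulAction.orbitRel G V) × G => p.2 • p.1.out) := by
    constructor
    · rintro ⟨c1, g1⟩ ⟨c2, g2⟩ h
      simp only at h
      have hc : c1 = c2 := by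
        have h1 : mk (g1 • c1.out) = c1 := hQmk c1 g1
        have h2 : mk (g2 • c2.out) = c2 := hQmk c2 g2
        rw [← h1, ← h2, h]
      subst hc
      have : g1 = g2 := hsmul_inj c1.out h
      rw [this]
    · intro z
      have h1 : mk z = mk ((mk z).out) := by rw [hmkdef, Quotient.out_eq]
      obtain ⟨g, hg⟩ := (hmk_eq z ((mk z).out)).1 h1
      exact ⟨⟨mk z, g⟩, hg⟩
  have hdecomp : ∀ F : V → ℝ, (Function.support F).Finite →
      (∑ᶠ c : Quotient (MulAction.orbitRel G V), ∑ᶠ g : G, F (g • c.out)) = ∑ᶠ z, F z := by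
    intro F hF
    set e : Quotient (MulAction.orbitRel G V) × G ≃ V :=
      Equiv.ofBijective _ hbij with hedef
    have h1 : (∑ᶠ p : Quotient (MulAction.orbitRel G V) × G, F (e p)) = ∑ᶠ z, F z :=
      finsum_comp_equiv e
    have hsupp : (Function.support (fun p => F (e p))).Finite := by
      have : Function.support (fun p => F (e p)) = e ⁻¹' (Function.support F) := rfl
      rw [this]
      exact Set.Finite.preimage (e.injective.injOn) hF
    rw [← h1, finsum_curry _ hsupp]
    rfl
  -- quotient degree = degree
  have hdegQ : ∀ a : V, (∑ᶠ u, wQ (mk a) u) = ∑ᶠ u, w a u := by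
    intro a
    rw [← hdecomp (fun u => w a u) (hlf a)]
    apply finsum_congr
    intro c
    calc wQ (mk a) c = wQ (mk a) (mk c.out) := by rw [hmkdef, Quotient.out_eq]
      _ = ∑ᶠ g : G, w a (g • c.out) := hwQ a c.out
  -- main induction
  have key : ∀ (n : ℕ) (a b : V), pQ n (mk a) (mk b) = ∑ᶠ g : G, pG n a (g • b) := by
    intro n
    induction n with
    | zero =>
      intro a b
      rw [hpQ0]
      rw [show (∑ᶠ g : G, pG 0 a (g • b)) = ∑ᶠ g : G, (if a = g • b then (1:ℝ) else 0) from
        finsum_congr (fun g => hpG0 a (g • b))]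
      exact (hdelta a b).symm
    | succ n ih =>
      intro a b
      -- RHS computation
      set F : G × V → ℝ := fun p => K a p.2 * pG n p.2 (p.1 • b) with hFdef
      have hFsupp : (Function.support F).Finite := by
        apply Set.Finite.subset
          (Set.Finite.prod (((hK_supp a).biUnion (fun z _ => hg_supp n z b))) (hK_supp a))
        rintro ⟨g, z⟩ hp
        simp only [hFdef, Function.mem_support] at hp
        have h1 : K a z ≠ 0 := fun h => hp (by rw [h, zero_mul])
        have h2 : pG n z (g • b) ≠ 0 := fun h => hp (by rw [h, mul_zero])
        exact ⟨Set.mem_biUnion h1 h2, h1⟩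
      have hFsupp' : (Function.support (fun p : V × G => F (p.2, p.1))).Finite := by
        have : Function.support (fun p : V × G => F (p.2, p.1)) =
            (Equiv.prodComm V G) ⁻¹' (Function.support F) := rfl
        rw [this]
        exact Set.Finite.preimage ((Equiv.prodComm V G).injective.injOn) hFsupp
      have hRHS : (∑ᶠ g : G, pG (n + 1) a (g • b))
          = ∑ᶠ z, K a z * pQ n (mk z) (mk b) := by
        calc (∑ᶠ g : G, pG (n + 1) a (g • b))
            = ∑ᶠ g : G, ∑ᶠ z, F (g, z) := finsum_congr (fun g => hpGrec n a (g • b))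
          _ = ∑ᶠ p : G × V, F p := (finsum_curry F hFsupp).symm
          _ = ∑ᶠ p : V × G, F ((Equiv.prodComm V G) p) :=
              (finsum_comp_equiv (Equiv.prodComm V G) (f := F)).symm
          _ = ∑ᶠ z, ∑ᶠ g : G, F (g, z) := finsum_curry _ hFsupp'
          _ = ∑ᶠ z, K a z * pQ n (mk z) (mk b) := by
              apply finsum_congr
              intro z
              rw [show (∑ᶠ g : G, F (g, z)) = ∑ᶠ g : G, K a z * pG n z (g • b) from rfl]
              rw [← mul_finsum _ _, ih z b]
      -- LHS computation
      rw [hpQrec, hRHS]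
      rw [← hdecomp (fun z => K a z * pQ n (mk z) (mk b))
        (Set.Finite.subset (hK_supp a) (by
          intro z hz
          simp only [Function.mem_support] at hz ⊢
          exact fun h => hz (by rw [show K a z = 0 from h, zero_mul])))]
      apply finsum_congr
      intro c
      have hstep1 : (∑ᶠ g : G, K a (g • c.out) * pQ n (mk (g • c.out)) (mk b))
          = (∑ᶠ g : G, K a (g • c.out)) * pQ n c (mk b) := by
        rw [finsum_mul _ _]
        apply finsum_congr
        intro g
        rw [hQmk c g]
      have hc : mk c.out = c := by rw [hmkdef, Quotient.out_eq]
      have hdsupp : (Function.support fun g : G =>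
          (if a = g • c.out then (1 : ℝ) else 0)).Finite := by
        apply Set.Finite.subset (Set.Finite.preimage ((hsmul_inj c.out).injOn)
          (Set.finite_singleton a))
        intro g hg
        simp only [Function.mem_support] at hg
        simp only [Set.mem_preimage, Set.mem_singleton_iff]
        by_cases h : a = g • c.out
        · exact h.symm
        · exact absurd (if_neg h) hg
      have hdcsupp : (Function.support fun g : G =>
          (1 - (1 / m a) * ∑ᶠ u, w a u) * (if a = g • c.out then (1 : ℝ) else 0)).Finite := by
        apply Set.Finite.subset hdsupp
        intro g hg
        simp only [Function.mem_support] at hg ⊢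
        exact fun h => hg (by rw [h, mul_zero])
      have hwsupp2 : (Function.support fun g : G => w a (g • c.out) / m a).Finite := by
        apply Set.Finite.subset (hgw_supp a c.out)
        intro g hg
        simp only [Function.mem_support] at hg
        simp only [Set.mem_setOf_eq]
        exact fun h => hg (by rw [h, zero_div])
      have hsplit : (∑ᶠ g : G, K a (g • c.out))
          = (∑ᶠ g : G, (1 - (1 / m a) * ∑ᶠ u, w a u) * (if a = g • c.out then (1 : ℝ) else 0))
            + ∑ᶠ g : G, w a (g • c.out) / m a := by
        rw [← finsum_add_distrib hdcsupp hwsupp2]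
      have h1 : (∑ᶠ g : G, (1 - (1 / m a) * ∑ᶠ u, w a u) * (if a = g • c.out then (1 : ℝ) else 0))
          = (1 - (1 / m a) * ∑ᶠ u, w a u) * (if mk a = c then 1 else 0) := by
        rw [← mul_finsum _ _, hdelta a c.out, hc]
      have h2 : (∑ᶠ g : G, w a (g • c.out) / m a) = wQ (mk a) c / m a := by
        have e1 : (∑ᶠ g : G, w a (g • c.out) / m a)
            = (∑ᶠ g : G, w a (g • c.out)) * (m a)⁻¹ := by
          rw [finsum_mul _ _]
          exact finsum_congr fun g => div_eq_mul_inv _ _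
        rw [e1, ← hwQ a c.out, hc, div_eq_mul_inv]
      have hstep2 : (∑ᶠ g : G, K a (g • c.out))
          = (1 - (1 / m a) * ∑ᶠ u, w a u) * (if mk a = c then 1 else 0)
            + wQ (mk a) c / m a := by
        rw [hsplit, h1, h2]
      rw [hstep1, hstep2, hmQ, hdegQ]
  constructor
  · exact key n x y
  · rw [hmQ, key n x y]
    rw [show (∑ᶠ g : G, pG n x (g • y) / m (g • y))
        = ∑ᶠ g : G, pG n x (g • y) * (m y)⁻¹ from
      finsum_congr (fun g => by rw [hGm, div_eq_mul_inv])]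
    rw [← finsum_mul _ _, div_eq_mul_inv]
end

section
/- Let A be a nonsingular d×d integer matrix and T_A = ℤ^d/Aℤ^d the weighted discrete torus with edge weights w_i > 0 and σ = 2∑w_i. Then for any n ≥ 1, the on-diagonal heat kernel satisfies q_n^{T_A}([x],[x]) = σ^{−(n+1)} ∑_{g ∈ Aℤ^d} ∑_{z ∈ 𝒫((n−|g|)/2,d)} n!/((abs(g)+z)!·z!)·w^{abs(g)+2z}, independent of [x]. -/
open scoped Real BigOperators Classical
open Function Set

noncomputable def Pk (d : ℕ) (wi : Fin d → ℝ) : ℕ → (Fin d → ℤ) → ℝ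
  | 0, g => if g = 0 then 1 else 0
  | n+1, g => ∑ i, wi i * (Pk d wi n (g + Pi.single i 1) + Pk d wi n (g - Pi.single i 1))

lemma Pk_bound (d : ℕ) (wi : Fin d → ℝ) : ∀ n g, Pk d wi n g ≠ 0 → ∀ i, (g i).natAbs ≤ n := by
  intro n
  induction n with
  | zero =>
    intro g hg i
    rw [Pk] at hg
    split_ifs at hg with h
    · simp [h]
    · simp at hg
  | succ n ih =>
    intro g hg i
    rw [Pk] at hg
    obtain ⟨j, -, hj⟩ := Finset.exists_ne_zero_of_sum_ne_zero hg
    have : Pk d wi n (g + Pi.single j 1) ≠ 0 ∨ Pk d wi n (g - Pi.single j 1) ≠ 0 := by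
      by_contra h
      push_neg at h
      simp [h.1, h.2] at hj
    rcases this with h | h
    · have := ih _ h i
      have h2 : (g + Pi.single j 1 : Fin d → ℤ) i = g i + (Pi.single j 1 : Fin d → ℤ) i := rfl
      rw [h2] at this
      rcases eq_or_ne i j with rfl | hij
      · simp at this; omega
      · simp [Pi.single_apply, hij] at this; omega
    · have := ih _ h i
      have h2 : (g - Pi.single j 1 : Fin d → ℤ) i = g i - (Pi.single j 1 : Fin d → ℤ) i := rfl
      rw [h2] at this
      rcases eq_or_ne i j with rfl | hij
      · simp at this; omega
      · simp [Pi.single_apply, hij] at this; omega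

lemma finite_int_box (d : ℕ) (m : ℕ) : {g : Fin d → ℤ | ∀ i, (g i).natAbs ≤ m}.Finite := by
  have : {g : Fin d → ℤ | ∀ i, (g i).natAbs ≤ m} ⊆ Set.pi Set.univ (fun _ => Set.Icc (-(m:ℤ)) m) := by
    intro g hg
    rw [Set.mem_univ_pi]
    intro i
    have := hg i
    simp only [Set.mem_Icc]
    omega
  exact (Set.Finite.pi (fun _ => Set.finite_Icc _ _)).subset this

lemma finite_support_of_box (d : ℕ) (m : ℕ) (f : (Fin d → ℤ) → ℝ)
    (h : ∀ g, f g ≠ 0 → ∀ i, (g i).natAbs ≤ m) : (support f).Finite :=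
  (finite_int_box d m).subset (fun g hg => h g hg)

lemma finite_nat_box (d : ℕ) (m : ℕ) : {z : Fin d → ℕ | ∀ i, z i ≤ m}.Finite := by
  have : {z : Fin d → ℕ | ∀ i, z i ≤ m} ⊆ Set.pi Set.univ (fun _ => Set.Icc 0 m) := by
    intro z hz
    rw [Set.mem_univ_pi]
    intro i
    simpa using hz i
  exact (Set.Finite.pi (fun _ => Set.finite_Icc _ _)).subset this

lemma finite_support_nat (d : ℕ) (m : ℕ) (f : (Fin d → ℕ) → ℝ)
    (h : ∀ z, f z ≠ 0 → ∀ i, z i ≤ m) : (support f).Finite :=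
  (finite_nat_box d m).subset (fun z hz => h z hz)

lemma finite_support_pair (d : ℕ) (m : ℕ) (f : (Fin d → ℕ) × (Fin d → ℕ) → ℝ)
    (h : ∀ ab, f ab ≠ 0 → (∀ i, ab.1 i ≤ m) ∧ (∀ i, ab.2 i ≤ m)) : (support f).Finite := by
  have : support f ⊆ ({z : Fin d → ℕ | ∀ i, z i ≤ m} ×ˢ {z : Fin d → ℕ | ∀ i, z i ≤ m}) := by
    intro ab hab
    exact Set.mem_prod.2 ⟨(h ab hab).1, (h ab hab).2⟩
  exact ((finite_nat_box d m).prod (finite_nat_box d m)).subset this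

noncomputable def Tt (d : ℕ) (wi : Fin d → ℝ) (n : ℕ) (ab : (Fin d → ℕ) × (Fin d → ℕ)) : ℝ :=
  (Nat.factorial n : ℝ) / ((∏ i, Nat.factorial (ab.1 i)) * ∏ i, Nat.factorial (ab.2 i)) * ∏ i, wi i ^ (ab.1 i + ab.2 i)

noncomputable def Gk (d : ℕ) (wi : Fin d → ℝ) (n : ℕ) (g : Fin d → ℤ) : ℝ :=
  ∑ᶠ ab : (Fin d → ℕ) × (Fin d → ℕ),
    if (fun i => (ab.1 i : ℤ) - (ab.2 i : ℤ)) = g ∧ ∑ i, (ab.1 i + ab.2 i) = n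
    then Tt d wi n ab else 0

lemma Gk_summand_bound (d : ℕ) (wi : Fin d → ℝ) (n : ℕ) (g : Fin d → ℤ)
    (F : (Fin d → ℕ) × (Fin d → ℕ) → ℝ)
    (hF : ∀ ab, (¬ ((fun i => (ab.1 i : ℤ) - (ab.2 i : ℤ)) = g ∧ ∑ i, (ab.1 i + ab.2 i) = n)) → F ab = 0) :
    (support F).Finite := by
  apply finite_support_pair d n
  intro ab hab
  by_cases h : (fun i => (ab.1 i : ℤ) - (ab.2 i : ℤ)) = g ∧ ∑ i, (ab.1 i + ab.2 i) = n
  · constructor <;> intro i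
    · calc ab.1 i ≤ ab.1 i + ab.2 i := Nat.le_add_right _ _
        _ ≤ ∑ j, (ab.1 j + ab.2 j) := Finset.single_le_sum (f := fun j => ab.1 j + ab.2 j) (fun j _ => Nat.zero_le _) (Finset.mem_univ i)
        _ = n := h.2
    · calc ab.2 i ≤ ab.1 i + ab.2 i := Nat.le_add_left _ _
        _ ≤ ∑ j, (ab.1 j + ab.2 j) := Finset.single_le_sum (f := fun j => ab.1 j + ab.2 j) (fun j _ => Nat.zero_le _) (Finset.mem_univ i)
        _ = n := h.2
  · exact absurd (hF ab h) hab

lemma Gk_zero (d : ℕ) (wi : Fin d → ℝ) (g : Fin d → ℤ) :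
    Gk d wi 0 g = if g = 0 then 1 else 0 := by
  rw [Gk]
  rw [finsum_eq_single _ ((0, 0) : (Fin d → ℕ) × (Fin d → ℕ))]
  · simp only [Prod.fst, Prod.snd]
    by_cases hg : g = 0
    · subst hg
      rw [if_pos, if_pos rfl, Tt]
      · simp
      · constructor
        · funext i; simp
        · simp
    · rw [if_neg hg, if_neg]
      rintro ⟨h1, -⟩
      apply hg
      rw [← h1]; funext i; simp
  · intro ab hab
    rw [if_neg]
    rintro ⟨-, h2⟩
    apply hab
    have : ∀ i, ab.1 i + ab.2 i = 0 := by
      intro i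
      have := Finset.sum_eq_zero_iff.1 h2 i (Finset.mem_univ i)
      omega
    have h1 : ab.1 = 0 := by funext i; have := this i; simp only [Pi.zero_apply]; omega
    have h2 : ab.2 = 0 := by funext i; have := this i; simp only [Pi.zero_apply]; omega
    rw [Prod.ext_iff]
    exact ⟨h1, h2⟩

lemma factprod_ne (d : ℕ) (a : Fin d → ℕ) : (∏ i, (Nat.factorial (a i)) : ℝ) ≠ 0 := by
  push_cast
  apply Finset.prod_ne_zero_iff.2
  intro i _
  exact_mod_cast Nat.factorial_ne_zero _

lemma shiftA (d : ℕ) (wi : Fin d → ℝ) (n : ℕ) (g : Fin d → ℤ) (i : Fin d) :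
    ∑ᶠ ab : (Fin d → ℕ) × (Fin d → ℕ),
      (if (fun j => (ab.1 j : ℤ) - (ab.2 j : ℤ)) = g ∧ ∑ j, (ab.1 j + ab.2 j) = n + 1
       then (ab.1 i : ℝ) * Tt d wi n ab else 0)
    = wi i * Gk d wi n (g - Pi.single i 1) := by
  set F : (Fin d → ℕ) × (Fin d → ℕ) → ℝ := fun ab =>
    if (fun j => (ab.1 j : ℤ) - (ab.2 j : ℤ)) = g ∧ ∑ j, (ab.1 j + ab.2 j) = n + 1
    then (ab.1 i : ℝ) * Tt d wi n ab else 0 with hF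
  set φ : (Fin d → ℕ) × (Fin d → ℕ) → (Fin d → ℕ) × (Fin d → ℕ) := fun ab =>
    (ab.1 + Pi.single i 1, ab.2) with hφ
  have hφinj : Function.Injective φ := by
    intro x y hxy
    rw [Prod.ext_iff] at hxy ⊢
    obtain ⟨h1, h2⟩ := hxy
    refine ⟨?_, h2⟩
    funext j
    have := congrFun h1 j
    simp only [hφ, Pi.add_apply] at this
    omega
  have hsupp : support F ⊆ Set.range φ := by
    intro ab hab
    by_cases h1 : ab.1 i = 0
    · exfalso
      apply hab
      simp only [hF]
      split_ifs
      · simp [h1]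
      · rfl
    · refine ⟨(ab.1 - Pi.single i 1, ab.2), ?_⟩
      rw [hφ, Prod.ext_iff]
      refine ⟨?_, rfl⟩
      funext j
      simp only [Pi.add_apply, Pi.sub_apply, Pi.single_apply]
      rcases eq_or_ne j i with rfl | hj
      · simp; omega
      · simp [hj]
    -- key pointwise computation
  have hpt : ∀ ab : (Fin d → ℕ) × (Fin d → ℕ), F (φ ab) =
      wi i * (if (fun j => (ab.1 j : ℤ) - (ab.2 j : ℤ)) = g - Pi.single i 1
                ∧ ∑ j, (ab.1 j + ab.2 j) = n
              then Tt d wi n ab else 0) := by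
    rintro ⟨a, b⟩
    have hc1 : ((fun j => (((a + Pi.single i 1 : Fin d → ℕ) j : ℕ) : ℤ) - (b j : ℤ)) = g)
        ↔ ((fun j => (a j : ℤ) - (b j : ℤ)) = g - Pi.single i 1) := by
      rw [funext_iff, funext_iff]
      apply forall_congr'
      intro j
      simp only [Pi.add_apply, Pi.sub_apply, Pi.single_apply]
      rcases eq_or_ne j i with rfl | hj
      · simp; push_cast; omega
      · simp only [if_neg hj]; push_cast; omega
    have hc2 : (∑ j, ((a + Pi.single i 1 : Fin d → ℕ) j + b j) = n + 1) ↔ (∑ j, (a j + b j) = n) := by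
      have h1 : ∀ j ∈ Finset.univ, (a + Pi.single i 1 : Fin d → ℕ) j + b j
          = (a j + b j) + (if j = i then 1 else 0) := by
        intro j _
        simp only [Pi.add_apply, Pi.single_apply]
        ring
      rw [Finset.sum_congr rfl h1, Finset.sum_add_distrib, Finset.sum_ite_eq' Finset.univ i (fun _ => 1)]
      simp only [Finset.mem_univ, if_true]
      omega
    have hprod : (∏ j, (Nat.factorial ((a + Pi.single i 1 : Fin d → ℕ) j)) : ℝ)
        = (a i + 1) * ∏ j, (Nat.factorial (a j)) := by
      push_cast
      have : ∀ j ∈ Finset.univ, (Nat.factorial ((a + Pi.single i 1 : Fin d → ℕ) j) : ℝ)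
          = (if j = i then ((a i : ℝ) + 1) else 1) * (Nat.factorial (a j) : ℝ) := by
        intro j _
        simp only [Pi.add_apply, Pi.single_apply]
        rcases eq_or_ne j i with rfl | hj
        · simp only [if_pos rfl]
          norm_num [Nat.factorial_succ]
        · simp [hj]
      rw [Finset.prod_congr rfl this, Finset.prod_mul_distrib, Finset.prod_ite_eq' Finset.univ i]
      simp
    have hw : (∏ j, wi j ^ ((a + Pi.single i 1 : Fin d → ℕ) j + b j))
        = wi i * ∏ j, wi j ^ (a j + b j) := by
      have : ∀ j ∈ Finset.univ, wi j ^ ((a + Pi.single i 1 : Fin d → ℕ) j + b j)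
          = (if j = i then wi i else 1) * wi j ^ (a j + b j) := by
        intro j _
        simp only [Pi.add_apply, Pi.single_apply]
        rcases eq_or_ne j i with rfl | hj
        · simp only [if_pos rfl]
          norm_num [pow_succ]
          ring
        · simp [hj]
      rw [Finset.prod_congr rfl this, Finset.prod_mul_distrib, Finset.prod_ite_eq' Finset.univ i]
      simp
    rw [hF]
    simp only [hφ]
    rw [if_congr (and_congr hc1 hc2) rfl rfl]
    split_ifs with h
    · have h1 : ((φ (a,b)).1 i : ℝ) = (a i : ℝ) + 1 := by
        simp [hφ]
      simp only [Tt]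
      have hA := factprod_ne d a
      have hB := factprod_ne d b
      have hc : ((a i : ℝ) + 1) ≠ 0 := by positivity
      push_cast at hA hB hprod hw ⊢
      rw [hprod, hw]
      field_simp
      rw [show (((a + Pi.single i 1 : Fin d → ℕ) i : ℕ) : ℝ) = (a i : ℝ) + 1 by simp]
    · ring
  have hrange : ∑ᶠ ab, F ab = ∑ᶠ ab, F (φ ab) := by
    rw [← finsum_mem_range hφinj, finsum_mem_def]
    apply finsum_congr
    intro ab
    by_cases hab : ab ∈ Set.range φ
    · exact (Set.indicator_of_mem hab F).symm
    · rw [Set.indicator_of_notMem hab]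
      by_contra hne
      exact hab (hsupp (by simpa [Function.mem_support] using hne))
  rw [hrange, finsum_congr hpt, Gk, ← smul_eq_mul, smul_finsum]
  rfl

lemma shiftB (d : ℕ) (wi : Fin d → ℝ) (n : ℕ) (g : Fin d → ℤ) (i : Fin d) :
    ∑ᶠ ab : (Fin d → ℕ) × (Fin d → ℕ),
      (if (fun j => (ab.1 j : ℤ) - (ab.2 j : ℤ)) = g ∧ ∑ j, (ab.1 j + ab.2 j) = n + 1
       then (ab.2 i : ℝ) * Tt d wi n ab else 0)
    = wi i * Gk d wi n (g + Pi.single i 1) := by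
  set F : (Fin d → ℕ) × (Fin d → ℕ) → ℝ := fun ab =>
    if (fun j => (ab.1 j : ℤ) - (ab.2 j : ℤ)) = g ∧ ∑ j, (ab.1 j + ab.2 j) = n + 1
    then (ab.2 i : ℝ) * Tt d wi n ab else 0 with hF
  set φ : (Fin d → ℕ) × (Fin d → ℕ) → (Fin d → ℕ) × (Fin d → ℕ) := fun ab =>
    (ab.1, ab.2 + Pi.single i 1) with hφ
  have hφinj : Function.Injective φ := by
    intro x y hxy
    rw [Prod.ext_iff] at hxy ⊢
    obtain ⟨h1, h2⟩ := hxy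
    refine ⟨h1, ?_⟩
    funext j
    have := congrFun h2 j
    simp only [hφ, Pi.add_apply] at this
    omega
  have hsupp : support F ⊆ Set.range φ := by
    intro ab hab
    by_cases h1 : ab.2 i = 0
    · exfalso
      apply hab
      simp only [hF]
      split_ifs
      · simp [h1]
      · rfl
    · refine ⟨(ab.1, ab.2 - Pi.single i 1), ?_⟩
      rw [hφ, Prod.ext_iff]
      refine ⟨rfl, ?_⟩
      funext j
      simp only [Pi.add_apply, Pi.sub_apply, Pi.single_apply]
      rcases eq_or_ne j i with rfl | hj
      · simp; omega
      · simp [hj]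
  have hpt : ∀ ab : (Fin d → ℕ) × (Fin d → ℕ), F (φ ab) =
      wi i * (if (fun j => (ab.1 j : ℤ) - (ab.2 j : ℤ)) = g + Pi.single i 1
                ∧ ∑ j, (ab.1 j + ab.2 j) = n
              then Tt d wi n ab else 0) := by
    rintro ⟨a, b⟩
    have hc1 : ((fun j => (a j : ℤ) - (((b + Pi.single i 1 : Fin d → ℕ) j : ℕ) : ℤ)) = g)
        ↔ ((fun j => (a j : ℤ) - (b j : ℤ)) = g + Pi.single i 1) := by
      rw [funext_iff, funext_iff]
      apply forall_congr'
      intro j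
      simp only [Pi.add_apply, Pi.single_apply]
      rcases eq_or_ne j i with rfl | hj
      · simp; push_cast; omega
      · simp only [if_neg hj]; push_cast; omega
    have hc2 : (∑ j, (a j + (b + Pi.single i 1 : Fin d → ℕ) j) = n + 1) ↔ (∑ j, (a j + b j) = n) := by
      have h1 : ∀ j ∈ Finset.univ, a j + (b + Pi.single i 1 : Fin d → ℕ) j
          = (a j + b j) + (if j = i then 1 else 0) := by
        intro j _
        simp only [Pi.add_apply, Pi.single_apply]
        ring
      rw [Finset.sum_congr rfl h1, Finset.sum_add_distrib, Finset.sum_ite_eq' Finset.univ i (fun _ => 1)]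
      simp only [Finset.mem_univ, if_true]
      omega
    have hprod : (∏ j, (Nat.factorial ((b + Pi.single i 1 : Fin d → ℕ) j)) : ℝ)
        = (b i + 1) * ∏ j, (Nat.factorial (b j)) := by
      push_cast
      have : ∀ j ∈ Finset.univ, (Nat.factorial ((b + Pi.single i 1 : Fin d → ℕ) j) : ℝ)
          = (if j = i then ((b i : ℝ) + 1) else 1) * (Nat.factorial (b j) : ℝ) := by
        intro j _
        simp only [Pi.add_apply, Pi.single_apply]
        rcases eq_or_ne j i with rfl | hj
        · simp only [if_pos rfl]
          norm_num [Nat.factorial_succ]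
        · simp [hj]
      rw [Finset.prod_congr rfl this, Finset.prod_mul_distrib, Finset.prod_ite_eq' Finset.univ i]
      simp
    have hw : (∏ j, wi j ^ (a j + (b + Pi.single i 1 : Fin d → ℕ) j))
        = wi i * ∏ j, wi j ^ (a j + b j) := by
      have : ∀ j ∈ Finset.univ, wi j ^ (a j + (b + Pi.single i 1 : Fin d → ℕ) j)
          = (if j = i then wi i else 1) * wi j ^ (a j + b j) := by
        intro j _
        simp only [Pi.add_apply, Pi.single_apply]
        rcases eq_or_ne j i with rfl | hj
        · simp only [if_pos rfl]
          norm_num [pow_succ]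
          ring
        · simp [hj]
      rw [Finset.prod_congr rfl this, Finset.prod_mul_distrib, Finset.prod_ite_eq' Finset.univ i]
      simp
    rw [hF]
    simp only [hφ]
    rw [if_congr (and_congr hc1 hc2) rfl rfl]
    split_ifs with h
    · simp only [Tt]
      have hA := factprod_ne d a
      have hB := factprod_ne d b
      have hc : ((b i : ℝ) + 1) ≠ 0 := by positivity
      push_cast at hA hB hprod hw ⊢
      rw [hprod, hw]
      field_simp
      rw [show (((b + Pi.single i 1 : Fin d → ℕ) i : ℕ) : ℝ) = (b i : ℝ) + 1 by simp]
    · ring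
  have hrange : ∑ᶠ ab, F ab = ∑ᶠ ab, F (φ ab) := by
    rw [← finsum_mem_range hφinj, finsum_mem_def]
    apply finsum_congr
    intro ab
    by_cases hab : ab ∈ Set.range φ
    · exact (Set.indicator_of_mem hab F).symm
    · rw [Set.indicator_of_notMem hab]
      by_contra hne
      exact hab (hsupp (by simpa [Function.mem_support] using hne))
  rw [hrange, finsum_congr hpt, Gk, ← smul_eq_mul, smul_finsum]
  rfl

lemma Pk_eq_Gk (d : ℕ) (wi : Fin d → ℝ) : ∀ n g, Pk d wi n g = Gk d wi n g := by
  intro n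
  induction n with
  | zero => intro g; rw [Pk, Gk_zero]
  | succ n ih =>
    intro g
    have hfinB : ∀ i : Fin d, (support (fun ab : (Fin d → ℕ) × (Fin d → ℕ) =>
        if (fun j => (ab.1 j : ℤ) - (ab.2 j : ℤ)) = g ∧ ∑ j, (ab.1 j + ab.2 j) = n + 1
        then (ab.2 i : ℝ) * Tt d wi n ab else 0)).Finite := by
      intro i
      apply Gk_summand_bound d wi (n+1) g
      intro ab hab
      rw [if_neg hab]
    have hfinA : ∀ i : Fin d, (support (fun ab : (Fin d → ℕ) × (Fin d → ℕ) =>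
        if (fun j => (ab.1 j : ℤ) - (ab.2 j : ℤ)) = g ∧ ∑ j, (ab.1 j + ab.2 j) = n + 1
        then (ab.1 i : ℝ) * Tt d wi n ab else 0)).Finite := by
      intro i
      apply Gk_summand_bound d wi (n+1) g
      intro ab hab
      rw [if_neg hab]
    rw [Pk]
    calc ∑ i, wi i * (Pk d wi n (g + Pi.single i 1) + Pk d wi n (g - Pi.single i 1))
        = ∑ i, ((∑ᶠ ab : (Fin d → ℕ) × (Fin d → ℕ),
            (if (fun j => (ab.1 j : ℤ) - (ab.2 j : ℤ)) = g ∧ ∑ j, (ab.1 j + ab.2 j) = n + 1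
             then (ab.2 i : ℝ) * Tt d wi n ab else 0))
          + (∑ᶠ ab : (Fin d → ℕ) × (Fin d → ℕ),
            (if (fun j => (ab.1 j : ℤ) - (ab.2 j : ℤ)) = g ∧ ∑ j, (ab.1 j + ab.2 j) = n + 1
             then (ab.1 i : ℝ) * Tt d wi n ab else 0))) := by
          apply Finset.sum_congr rfl
          intro i _
          rw [ih, ih, shiftB, shiftA, mul_add]
      _ = ∑ i, ∑ᶠ ab : (Fin d → ℕ) × (Fin d → ℕ),
            ((if (fun j => (ab.1 j : ℤ) - (ab.2 j : ℤ)) = g ∧ ∑ j, (ab.1 j + ab.2 j) = n + 1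
             then (ab.2 i : ℝ) * Tt d wi n ab else 0)
            + (if (fun j => (ab.1 j : ℤ) - (ab.2 j : ℤ)) = g ∧ ∑ j, (ab.1 j + ab.2 j) = n + 1
             then (ab.1 i : ℝ) * Tt d wi n ab else 0)) := by
          apply Finset.sum_congr rfl
          intro i _
          rw [finsum_add_distrib (hfinB i) (hfinA i)]
      _ = ∑ᶠ ab : (Fin d → ℕ) × (Fin d → ℕ), ∑ i,
            ((if (fun j => (ab.1 j : ℤ) - (ab.2 j : ℤ)) = g ∧ ∑ j, (ab.1 j + ab.2 j) = n + 1
             then (ab.2 i : ℝ) * Tt d wi n ab else 0)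
            + (if (fun j => (ab.1 j : ℤ) - (ab.2 j : ℤ)) = g ∧ ∑ j, (ab.1 j + ab.2 j) = n + 1
             then (ab.1 i : ℝ) * Tt d wi n ab else 0)) := by
          apply sum_finsum_comm
          intro i _
          apply Set.Finite.subset ((hfinB i).union (hfinA i))
          intro ab hab
          simp only [Function.mem_support] at hab ⊢
          by_contra hcon
          simp only [Set.mem_union, Function.mem_support, not_or, not_not] at hcon
          exact hab (by rw [hcon.1, hcon.2, add_zero])
      _ = Gk d wi (n+1) g := by
          rw [Gk]
          apply finsum_congr
          intro ab
          by_cases hc : (fun j => (ab.1 j : ℤ) - (ab.2 j : ℤ)) = g ∧ ∑ j, (ab.1 j + ab.2 j) = n + 1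
          · simp only [if_pos hc]
            have : ∀ i ∈ Finset.univ, ((ab.2 i : ℝ) * Tt d wi n ab + (ab.1 i : ℝ) * Tt d wi n ab)
                = ((ab.1 i + ab.2 i : ℕ) : ℝ) * Tt d wi n ab := by
              intro i _
              push_cast; ring
            rw [Finset.sum_congr rfl this, ← Finset.sum_mul]
            have hsum : (∑ i, ((ab.1 i + ab.2 i : ℕ) : ℝ)) = ((n : ℝ) + 1) := by
              rw [← Nat.cast_sum]
              rw [hc.2]
              push_cast; ring
            rw [hsum]
            simp only [Tt, Nat.factorial_succ]
            push_cast; ring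
          · simp only [if_neg hc, add_zero, Finset.sum_const_zero]

lemma Gk_eq_F (d : ℕ) (wi : Fin d → ℝ) (n : ℕ) (g : Fin d → ℤ) :
    Gk d wi n g = ∑ᶠ z : Fin d → ℕ,
      if (∑ i, (g i).natAbs) + 2 * ∑ i, z i = n then
        (Nat.factorial n : ℝ) /
          ((∏ i, Nat.factorial ((g i).natAbs + z i)) * ∏ i, Nat.factorial (z i)) *
        ∏ i, wi i ^ ((g i).natAbs + 2 * z i)
      else 0 := by
  set F : (Fin d → ℕ) × (Fin d → ℕ) → ℝ := fun ab =>
    if (fun j => (ab.1 j : ℤ) - (ab.2 j : ℤ)) = g ∧ ∑ j, (ab.1 j + ab.2 j) = n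
    then Tt d wi n ab else 0 with hF
  set ψ : (Fin d → ℕ) → (Fin d → ℕ) × (Fin d → ℕ) := fun z =>
    (fun i => z i + (g i).toNat, fun i => z i + (-(g i)).toNat) with hψ
  have hψinj : Function.Injective ψ := by
    intro x y hxy
    rw [hψ, Prod.ext_iff] at hxy
    funext j
    have := congrFun hxy.1 j
    simpa using this
  have hsupp : support F ⊆ Set.range ψ := by
    intro ab hab
    have hc : (fun j => (ab.1 j : ℤ) - (ab.2 j : ℤ)) = g ∧ ∑ j, (ab.1 j + ab.2 j) = n := by
      by_contra hcon
      exact hab (by simp only [hF, if_neg hcon])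
    refine ⟨fun i => min (ab.1 i) (ab.2 i), ?_⟩
    rw [hψ, Prod.ext_iff]
    constructor
    · funext j
      show min (ab.1 j) (ab.2 j) + (g j).toNat = ab.1 j
      have := congrFun hc.1 j
      omega
    · funext j
      show min (ab.1 j) (ab.2 j) + (-(g j)).toNat = ab.2 j
      have := congrFun hc.1 j
      omega
  have hrange : ∑ᶠ ab, F ab = ∑ᶠ z, F (ψ z) := by
    rw [← finsum_mem_range hψinj, finsum_mem_def]
    apply finsum_congr
    intro ab
    by_cases hab : ab ∈ Set.range ψ
    · exact (Set.indicator_of_mem hab F).symm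
    · rw [Set.indicator_of_notMem hab]
      by_contra hne
      exact hab (hsupp (by simpa [Function.mem_support] using hne))
  rw [Gk, hrange]
  apply finsum_congr
  intro z
  have hc1 : (fun j => (((ψ z).1 j : ℕ) : ℤ) - (((ψ z).2 j : ℕ) : ℤ)) = g := by
    funext j
    simp only [hψ]
    push_cast
    omega
  have hc2 : (∑ j, ((ψ z).1 j + (ψ z).2 j) = n) ↔ ((∑ i, (g i).natAbs) + 2 * ∑ i, z i = n) := by
    have h1 : ∀ j ∈ Finset.univ, (ψ z).1 j + (ψ z).2 j = (g j).natAbs + 2 * z j := by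
      intro j _
      simp only [hψ]
      omega
    rw [Finset.sum_congr rfl h1, Finset.sum_add_distrib, ← Finset.mul_sum]
  have hval : Tt d wi n (ψ z) =
      (Nat.factorial n : ℝ) /
          ((∏ i, Nat.factorial ((g i).natAbs + z i)) * ∏ i, Nat.factorial (z i)) *
        ∏ i, wi i ^ ((g i).natAbs + 2 * z i) := by
    simp only [Tt, hψ]
    have hden : (∏ i, Nat.factorial (z i + (g i).toNat)) * (∏ i, Nat.factorial (z i + (-(g i)).toNat))
        = (∏ i, Nat.factorial ((g i).natAbs + z i)) * ∏ i, Nat.factorial (z i) := by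
      rw [← Finset.prod_mul_distrib, ← Finset.prod_mul_distrib]
      apply Finset.prod_congr rfl
      intro j _
      rcases le_or_gt 0 (g j) with hgj | hgj
      · have e1 : z j + (g j).toNat = (g j).natAbs + z j := by omega
        have e2 : z j + (-(g j)).toNat = z j := by omega
        rw [e1, e2]
      · have e1 : z j + (g j).toNat = z j := by omega
        have e2 : z j + (-(g j)).toNat = (g j).natAbs + z j := by omega
        rw [e1, e2, mul_comm]
    have hexp : ∀ j ∈ Finset.univ, wi j ^ (z j + (g j).toNat + (z j + (-(g j)).toNat))
        = wi j ^ ((g j).natAbs + 2 * z j) := by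
      intro j _
      congr 1
      omega
    rw [Finset.prod_congr rfl hexp]
    congr 2
    exact_mod_cast congrArg (fun m : ℕ => (m : ℝ)) hden
  simp only [hF]
  have hcond : ((fun j => (((ψ z).1 j : ℕ) : ℤ) - (((ψ z).2 j : ℕ) : ℤ)) = g
      ∧ ∑ j, ((ψ z).1 j + (ψ z).2 j) = n) ↔ ((∑ i, (g i).natAbs) + 2 * ∑ i, z i = n) :=
    (and_iff_right hc1).trans hc2
  rw [if_congr hcond hval rfl]

lemma q_formula (d : ℕ) (hd : 0 < d) (A : Matrix (Fin d) (Fin d) ℤ)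
    (wi : Fin d → ℝ) (hw : ∀ i, 0 < wi i)
    (q : ℕ → ((Fin d → ℤ) ⧸ LinearMap.range (Matrix.mulVecLin A)) →
      ((Fin d → ℤ) ⧸ LinearMap.range (Matrix.mulVecLin A)) → ℝ)
    (hq0 : ∀ a b, q 0 a b = (if a = b then 1 else 0) / (2 * ∑ i, wi i))
    (hqrec : ∀ (n : ℕ) (a b : (Fin d → ℤ) ⧸ LinearMap.range (Matrix.mulVecLin A)),
      q (n + 1) a b - q n a b = (1 / (2 * ∑ i, wi i)) *
        ∑ i, wi i * (q n (a + Submodule.Quotient.mk (Pi.single i 1)) b +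
          q n (a - Submodule.Quotient.mk (Pi.single i 1)) b - 2 * q n a b)) :
    ∀ (n : ℕ) (a b : (Fin d → ℤ) ⧸ LinearMap.range (Matrix.mulVecLin A)),
      q n a b = (1 / (2 * ∑ i, wi i)) ^ (n + 1) *
        ∑ᶠ g : Fin d → ℤ, if (Submodule.Quotient.mk g :
            (Fin d → ℤ) ⧸ LinearMap.range (Matrix.mulVecLin A)) = b - a
          then Pk d wi n g else 0 := by
  have hne : Nonempty (Fin d) := ⟨⟨0, hd⟩⟩
  have hS : 0 < ∑ i, wi i := Finset.sum_pos (fun i _ => hw i) Finset.univ_nonempty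
  have h2S : (2 * ∑ i, wi i) ≠ 0 := by positivity
  -- generic shift identity
  have hshift : ∀ (m : ℕ) (x : Fin d → ℤ)
      (c : (Fin d → ℤ) ⧸ LinearMap.range (Matrix.mulVecLin A)),
      (∑ᶠ g : Fin d → ℤ, if (Submodule.Quotient.mk g :
          (Fin d → ℤ) ⧸ LinearMap.range (Matrix.mulVecLin A)) = c - Submodule.Quotient.mk x
        then Pk d wi m g else 0)
      = ∑ᶠ g : Fin d → ℤ, if (Submodule.Quotient.mk g :
          (Fin d → ℤ) ⧸ LinearMap.range (Matrix.mulVecLin A)) = c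
        then Pk d wi m (g - x) else 0 := by
    intro m x c
    rw [← finsum_comp_equiv (Equiv.subRight x)]
    apply finsum_congr
    intro g
    simp only [Equiv.subRight_apply]
    rw [if_congr (by rw [Submodule.Quotient.mk_sub, sub_left_inj]) rfl rfl]
  intro n
  induction n with
  | zero =>
    intro a b
    have hsum : (∑ᶠ g : Fin d → ℤ, if (Submodule.Quotient.mk g :
            (Fin d → ℤ) ⧸ LinearMap.range (Matrix.mulVecLin A)) = b - a
          then Pk d wi 0 g else 0) = if a = b then 1 else 0 := by
      rw [finsum_eq_single _ (0 : Fin d → ℤ)]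
      · have h0 : (Submodule.Quotient.mk (0 : Fin d → ℤ) :
            (Fin d → ℤ) ⧸ LinearMap.range (Matrix.mulVecLin A)) = 0 :=
          Submodule.Quotient.mk_zero _
        rw [h0, show Pk d wi 0 (0 : Fin d → ℤ) = 1 by rw [Pk]; simp]
        by_cases hab : a = b
        · rw [if_pos (by rw [hab, sub_self]), if_pos hab]
        · rw [if_neg (fun h => hab (by
            rw [eq_comm, sub_eq_zero] at h
            exact h.symm)), if_neg hab]
      · intro x hx
        rw [Pk]
        simp [hx]
    rw [hq0, hsum, pow_one]
    ring
  | succ n ih =>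
    intro a b
    -- step 1: recursion in positive form
    have key : q (n+1) a b = (1/(2 * ∑ i, wi i)) *
        ∑ i, wi i * (q n (a + Submodule.Quotient.mk (Pi.single i 1)) b +
          q n (a - Submodule.Quotient.mk (Pi.single i 1)) b) := by
      have h := hqrec n a b
      have hexp : ∀ i ∈ Finset.univ,
          wi i * (q n (a + Submodule.Quotient.mk (Pi.single i 1)) b +
            q n (a - Submodule.Quotient.mk (Pi.single i 1)) b - 2 * q n a b)
          = wi i * (q n (a + Submodule.Quotient.mk (Pi.single i 1)) b +
            q n (a - Submodule.Quotient.mk (Pi.single i 1)) b) - 2 * q n a b * wi i := by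
        intro i _
        ring
      rw [Finset.sum_congr rfl hexp, Finset.sum_sub_distrib, ← Finset.mul_sum] at h
      field_simp at h ⊢
      linarith
    -- step 2: apply ih and the shift identity
    have hterm : ∀ i : Fin d,
        wi i * (q n (a + Submodule.Quotient.mk (Pi.single i 1)) b +
          q n (a - Submodule.Quotient.mk (Pi.single i 1)) b)
        = (1 / (2 * ∑ i, wi i)) ^ (n + 1) * (wi i *
            ((∑ᶠ g : Fin d → ℤ, if (Submodule.Quotient.mk g :
              (Fin d → ℤ) ⧸ LinearMap.range (Matrix.mulVecLin A)) = b - a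
              then Pk d wi n (g - Pi.single i 1) else 0)
            + ∑ᶠ g : Fin d → ℤ, if (Submodule.Quotient.mk g :
              (Fin d → ℤ) ⧸ LinearMap.range (Matrix.mulVecLin A)) = b - a
              then Pk d wi n (g + Pi.single i 1) else 0)) := by
      intro i
      have e1 : b - (a + Submodule.Quotient.mk (Pi.single i 1)) =
          (b - a) - Submodule.Quotient.mk (Pi.single i 1) := by abel
      have e2 : b - (a - Submodule.Quotient.mk (Pi.single i 1)) =
          (b - a) - Submodule.Quotient.mk (-(Pi.single i 1)) := by
        rw [Submodule.Quotient.mk_neg]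
        abel
      rw [ih, ih, e1, e2, hshift n (Pi.single i 1) (b - a), hshift n (-(Pi.single i 1)) (b - a)]
      have e3 : ∀ g : Fin d → ℤ, g - -(Pi.single i 1) = g + Pi.single i 1 := by
        intro g; abel
      have e4 : (∑ᶠ g : Fin d → ℤ, if (Submodule.Quotient.mk g :
              (Fin d → ℤ) ⧸ LinearMap.range (Matrix.mulVecLin A)) = b - a
              then Pk d wi n (g - -(Pi.single i 1)) else 0)
          = ∑ᶠ g : Fin d → ℤ, if (Submodule.Quotient.mk g :
              (Fin d → ℤ) ⧸ LinearMap.range (Matrix.mulVecLin A)) = b - a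
              then Pk d wi n (g + Pi.single i 1) else 0 := by
        apply finsum_congr
        intro g
        rw [e3]
      rw [e4]
      ring
    -- step 3: exchange sums
    have hfin : ∀ (x : Fin d → ℤ), (∀ j, (x j).natAbs ≤ 1) →
        (support fun g : Fin d → ℤ => if (Submodule.Quotient.mk g :
            (Fin d → ℤ) ⧸ LinearMap.range (Matrix.mulVecLin A)) = b - a
          then Pk d wi n (g + x) else 0).Finite := by
      intro x hx
      apply finite_support_of_box d (n+1)
      intro g hg j
      have hP : Pk d wi n (g + x) ≠ 0 := by
        intro h0
        apply hg
        show (if (Submodule.Quotient.mk g :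
            (Fin d → ℤ) ⧸ LinearMap.range (Matrix.mulVecLin A)) = b - a
          then Pk d wi n (g + x) else 0) = 0
        rw [h0]
        split_ifs <;> rfl
      have h1 := Pk_bound d wi n (g + x) hP j
      have hxj := hx j
      have h2 : ((g + x : Fin d → ℤ) j) = g j + x j := rfl
      rw [h2] at h1
      omega
    have hfinp : ∀ i : Fin d, (support fun g : Fin d → ℤ => if (Submodule.Quotient.mk g :
            (Fin d → ℤ) ⧸ LinearMap.range (Matrix.mulVecLin A)) = b - a
          then Pk d wi n (g + Pi.single i 1) else 0).Finite := by
      intro i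
      apply hfin
      intro j
      simp only [Pi.single_apply]
      split_ifs <;> simp
    have hfinm : ∀ i : Fin d, (support fun g : Fin d → ℤ => if (Submodule.Quotient.mk g :
            (Fin d → ℤ) ⧸ LinearMap.range (Matrix.mulVecLin A)) = b - a
          then Pk d wi n (g - Pi.single i 1) else 0).Finite := by
      intro i
      have := hfin (-(Pi.single i 1)) (by
        intro j
        simp only [Pi.neg_apply, Pi.single_apply]
        split_ifs <;> simp)
      simpa [sub_eq_add_neg] using this
    -- step 4: assemble
    rw [key, Finset.sum_congr rfl (fun i _ => hterm i), ← Finset.mul_sum]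
    have hsuf : (∑ i, wi i *
            ((∑ᶠ g : Fin d → ℤ, if (Submodule.Quotient.mk g :
              (Fin d → ℤ) ⧸ LinearMap.range (Matrix.mulVecLin A)) = b - a
              then Pk d wi n (g - Pi.single i 1) else 0)
            + ∑ᶠ g : Fin d → ℤ, if (Submodule.Quotient.mk g :
              (Fin d → ℤ) ⧸ LinearMap.range (Matrix.mulVecLin A)) = b - a
              then Pk d wi n (g + Pi.single i 1) else 0))
        = ∑ᶠ g : Fin d → ℤ, if (Submodule.Quotient.mk g :
            (Fin d → ℤ) ⧸ LinearMap.range (Matrix.mulVecLin A)) = b - a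
          then Pk d wi (n+1) g else 0 := by
      have step1 : ∀ i ∈ Finset.univ, wi i *
            ((∑ᶠ g : Fin d → ℤ, if (Submodule.Quotient.mk g :
              (Fin d → ℤ) ⧸ LinearMap.range (Matrix.mulVecLin A)) = b - a
              then Pk d wi n (g - Pi.single i 1) else 0)
            + ∑ᶠ g : Fin d → ℤ, if (Submodule.Quotient.mk g :
              (Fin d → ℤ) ⧸ LinearMap.range (Matrix.mulVecLin A)) = b - a
              then Pk d wi n (g + Pi.single i 1) else 0)
          = ∑ᶠ g : Fin d → ℤ, wi i *
              ((if (Submodule.Quotient.mk g :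
               (Fin d → ℤ) ⧸ LinearMap.range (Matrix.mulVecLin A)) = b - a
               then Pk d wi n (g - Pi.single i 1) else 0)
              + (if (Submodule.Quotient.mk g :
               (Fin d → ℤ) ⧸ LinearMap.range (Matrix.mulVecLin A)) = b - a
               then Pk d wi n (g + Pi.single i 1) else 0)) := by
        intro i _
        rw [← finsum_add_distrib (hfinm i) (hfinp i), ← smul_eq_mul, smul_finsum]
        rfl
      rw [Finset.sum_congr rfl step1]
      rw [sum_finsum_comm _ _ (by
        intro i _
        apply Set.Finite.subset ((hfinm i).union (hfinp i))
        intro g hg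
        simp only [Function.mem_support] at hg
        by_contra hcon
        simp only [Set.mem_union, Function.mem_support, not_or, not_not] at hcon
        exact hg (by rw [hcon.1, hcon.2, add_zero, mul_zero]))]
      apply finsum_congr
      intro g
      by_cases hc : (Submodule.Quotient.mk g :
          (Fin d → ℤ) ⧸ LinearMap.range (Matrix.mulVecLin A)) = b - a
      · simp only [if_pos hc]
        rw [Pk]
        apply Finset.sum_congr rfl
        intro i _
        ring
      · simp only [if_neg hc]
        simp
    rw [hsuf]
    ring

lemma mulVec_inj (d : ℕ) (A : Matrix (Fin d) (Fin d) ℤ) (hA : A.det ≠ 0) :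
    Function.Injective (fun v : Fin d → ℤ => A.mulVec v) := by
  intro x y hxy
  simp only at hxy
  have h1 : (Matrix.adjugate A * A).mulVec x = (Matrix.adjugate A * A).mulVec y := by
    rw [← Matrix.mulVec_mulVec, ← Matrix.mulVec_mulVec, hxy]
  rw [Matrix.adjugate_mul, Matrix.smul_mulVec, Matrix.smul_mulVec,
    Matrix.one_mulVec, Matrix.one_mulVec] at h1
  exact smul_right_injective _ hA h1

/-- On-diagonal heat kernel of the weighted discrete torus `T_A = ℤ^d/Aℤ^d`:
`q_n([x],[x]) = σ^{-(n+1)} ∑_{g∈Aℤ^d} ∑_{z ∈ 𝒫((n-|g|)/2,d)} n!/((abs(g)+z)! z!) w^{abs(g)+2z}`,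
independent of `[x]`.  The sum over `g ∈ Aℤ^d` is parametrized by `g = A v`, `v ∈ ℤ^d`,
and the quotient Laplacian is used in the heat-kernel recursion. -/
theorem torus_heat_kernel_diagonal
    (d : ℕ) (A : Matrix (Fin d) (Fin d) ℤ) (hA : A.det ≠ 0)
    (wi : Fin d → ℝ) (hw : ∀ i, 0 < wi i)
    (q : ℕ → ((Fin d → ℤ) ⧸ LinearMap.range (Matrix.mulVecLin A)) →
      ((Fin d → ℤ) ⧸ LinearMap.range (Matrix.mulVecLin A)) → ℝ)
    (hq0 : ∀ a b, q 0 a b = (if a = b then 1 else 0) / (2 * ∑ i, wi i))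
    (hqrec : ∀ (n : ℕ) (a b : (Fin d → ℤ) ⧸ LinearMap.range (Matrix.mulVecLin A)),
      q (n + 1) a b - q n a b = (1 / (2 * ∑ i, wi i)) *
        ∑ i, wi i * (q n (a + Submodule.Quotient.mk (Pi.single i 1)) b +
          q n (a - Submodule.Quotient.mk (Pi.single i 1)) b - 2 * q n a b))
    (n : ℕ) (hn : 1 ≤ n)
    (a : (Fin d → ℤ) ⧸ LinearMap.range (Matrix.mulVecLin A)) :
    q n a a = (1 / (2 * ∑ i, wi i)) ^ (n + 1) *
      ∑ᶠ v : Fin d → ℤ, ∑ᶠ z : Fin d → ℕ,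
        if (∑ i, ((A.mulVec v) i).natAbs) + 2 * ∑ i, z i = n then
          (Nat.factorial n : ℝ) /
            ((∏ i, Nat.factorial (((A.mulVec v) i).natAbs + z i)) *
              ∏ i, Nat.factorial (z i)) *
          ∏ i, wi i ^ (((A.mulVec v) i).natAbs + 2 * z i)
        else 0 := by
  rcases Nat.eq_zero_or_pos d with rfl | hd
  · -- degenerate case d = 0
    have hS : (∑ i : Fin 0, wi i) = 0 := by simp
    have hq : ∀ m (x y : (Fin 0 → ℤ) ⧸ LinearMap.range (Matrix.mulVecLin A)), q m x y = 0 := by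
      intro m
      induction m with
      | zero => intro x y; rw [hq0, hS]; simp
      | succ m ih =>
        intro x y
        have h := hqrec m x y
        simp only [Finset.univ_eq_empty, Finset.sum_empty, mul_zero] at h
        have := ih x y
        linarith
    rw [hq n a a, hS]
    norm_num
  · rw [q_formula d hd A wi hw q hq0 hqrec n a a, sub_self]
    congr 1
    have hrange : (fun g : Fin d → ℤ => if (Submodule.Quotient.mk g :
          (Fin d → ℤ) ⧸ LinearMap.range (Matrix.mulVecLin A)) = 0
        then Pk d wi n g else 0)
        = Set.indicator (Set.range (fun v : Fin d → ℤ => A.mulVec v)) (Pk d wi n) := by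
      funext g
      by_cases hg : g ∈ Set.range (fun v : Fin d → ℤ => A.mulVec v)
      · rw [Set.indicator_of_mem hg, if_pos]
        rw [Submodule.Quotient.mk_eq_zero]
        obtain ⟨v, hv⟩ := hg
        exact ⟨v, hv⟩
      · rw [Set.indicator_of_notMem hg, if_neg]
        intro hc
        rw [Submodule.Quotient.mk_eq_zero] at hc
        obtain ⟨v, hv⟩ := hc
        exact hg ⟨v, hv⟩
    rw [hrange]
    rw [← finsum_mem_def, finsum_mem_range (mulVec_inj d A hA)]
    apply finsum_congr
    intro v
    rw [Pk_eq_Gk, Gk_eq_F]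
end
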